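/- Let X be a cyclic set of M⁺ with e ∈ X, and let 𝒴 be a nonempty collection of cyclic flats of M⁺, each properly contained in X, such that e lies in some circuit of M⁺ contained in ⋂_{Y ∈ 𝒴} Y (that is, e belongs to the lattice meet ∧𝒴 of the members of 𝒴). Then −Δγ(X) = Σ Δγ(Z), where the sum ranges over all cyclic flats Z of M⁺ such that Z ⊊ X and Z is not contained in any member of 𝒴. -/

import Mathlib

open Set Matroid
open scoped Classical

set_option linter.unusedSectionVars false

namespace Paper

variable {α : Type*}

/-- A circuit of a matroid: a minimal dependent set. -/
def Circuit (M : Matroid α) (C : Set α) : Prop :=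
  M.Dep C ∧ ∀ D ⊂ C, M.Indep D

/-- A coloop: an element of the ground set lying in no circuit. -/
def Coloop (M : Matroid α) (x : α) : Prop :=
  x ∈ M.E ∧ ∀ C, Circuit M C → x ∉ C

/-- The set of coloops of a matroid. -/
def coloops (M : Matroid α) : Set α := {x | Coloop M x}

/-- A cyclic set: a subset of the ground set each of whose elements lies in a
circuit contained in the set (equivalently, the restriction has no coloops). -/
def Cyclic (M : Matroid α) (X : Set α) : Prop :=
  X ⊆ M.E ∧ ∀ x ∈ X, ∃ C, Circuit M C ∧ C ⊆ X ∧ x ∈ C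

/-- A cyclic flat: a cyclic set that is also a flat. -/
def CyclicFlat (M : Matroid α) (X : Set α) : Prop :=
  Cyclic M X ∧ M.IsFlat X

/-- The rank of a set: the largest cardinality of an independent subset. -/
noncomputable def rk (M : Matroid α) (X : Set α) : ℕ :=
  sSup (Set.ncard '' {I | M.Indep I ∧ I ⊆ X})

/-- The nullity of a set: `n(X) = |X| − r(X)`. -/
noncomputable def nullity (M : Matroid α) (X : Set α) : ℤ :=
  (X.ncard : ℤ) - rk M X

/-- Deletion of a single element: `M \ e`. -/
noncomputable def deleteElem (M : Matroid α) (e : α) : Matroid α :=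
  M ↾ (M.E \ {e})

variable [Fintype α] [DecidableEq α]

/-- The `γ` function: `γ_M(X) = n(X) − Σ_{Z ∈ Z(M), Z ⊊ X} γ_M(Z)`. -/
noncomputable def gamma (M : Matroid α) (X : Finset α) : ℤ :=
  nullity M ↑X -
    ∑ Z ∈ (Finset.univ.filter (fun Z : Finset α => CyclicFlat M ↑Z ∧ Z ⊂ X)).attach,
      gamma M Z.1
termination_by X.card
decreasing_by
  exact Finset.card_lt_card (Finset.mem_filter.mp Z.2).2.2

/-- `Δγ(X) = γ_M(X − e) − γ_{M⁺}(X)` where `M = M⁺ \ e`. -/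
noncomputable def dgamma (M : Matroid α) (e : α) (X : Finset α) : ℤ :=
  gamma (deleteElem M e) (X.erase e) - gamma M X

/-! ### Auxiliary general lemmas -/

section BasicLemmas
variable {M : Matroid α} {X R S I F D C : Set α} {e x : α}

lemma flat_closure' (M : Matroid α) (X : Set α) : M.IsFlat (M.closure X) := by
  refine ⟨fun I X' hI hX' => ?_, M.closure_subset_ground X⟩
  have h := hX'.subset_closure
  rwa [hI.closure_eq_closure, closure_closure] at h

lemma flat_of_closure_subset' (hF : F ⊆ M.E) (h : M.closure F ⊆ F) : M.IsFlat F := by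
  have : M.closure F = F := h.antisymm (M.subset_closure F hF)
  exact this ▸ flat_closure' M F

/-- Every dependent finite set contains a circuit. -/
lemma dep_exists_circuit (hD : M.Dep D) (hfin : D.Finite) : ∃ C, C ⊆ D ∧ Circuit M C := by
  obtain ⟨n, hn⟩ : ∃ n, D.ncard ≤ n := ⟨D.ncard, le_rfl⟩
  induction n generalizing D with
  | zero =>
    rw [Nat.le_zero, Set.ncard_eq_zero hfin] at hn
    subst hn; exact absurd M.empty_indep hD.not_indep
  | succ n ih =>
    by_cases h : ∀ D' ⊂ D, M.Indep D'
    · exact ⟨D, Subset.rfl, hD, h⟩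
    · push_neg at h
      obtain ⟨D', hD'sub, hD'⟩ := h
      have hD'dep : M.Dep D' := ⟨hD', hD'sub.subset.trans hD.subset_ground⟩
      have hfin' : D'.Finite := hfin.subset hD'sub.subset
      have hcard : D'.ncard < D.ncard := Set.ncard_lt_ncard hD'sub hfin
      obtain ⟨C, hCsub, hC⟩ := ih hD'dep hfin' (by omega)
      exact ⟨C, hCsub.trans hD'sub.subset, hC⟩

lemma Circuit.subset_ground (hC : Circuit M C) : C ⊆ M.E := hC.1.subset_ground

lemma Circuit.mem_closure_diff (hC : Circuit M C) (hx : x ∈ C) :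
    x ∈ M.closure (C \ {x}) := by
  have hss : C \ {x} ⊂ C := Set.sdiff_singleton_ssubset.2 hx
  have hI : M.Indep (C \ {x}) := hC.2 _ hss
  have hins : insert x (C \ {x}) = C := by
    rw [Set.insert_diff_singleton, Set.insert_eq_self.2 hx]
  have hdep : M.Dep (insert x (C \ {x})) := by rw [hins]; exact hC.1
  exact ((hI.insert_dep_iff).1 hdep).1

/-- An element of the closure of `S` not in `S` lies on a circuit within `insert x S`. -/
lemma exists_circuit_of_mem_closure (hS : S ⊆ M.E) (hfin : S.Finite)
    (hx : x ∈ M.closure S) (hxS : x ∉ S) :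
    ∃ C, Circuit M C ∧ x ∈ C ∧ C ⊆ insert x S := by
  obtain ⟨I, hI⟩ := M.exists_isBasis S hS
  have hxI : x ∈ M.closure I := by rwa [hI.closure_eq_closure]
  have hxI' : x ∉ I := fun h => hxS (hI.subset h)
  have hdep : M.Dep (insert x I) := hI.indep.insert_dep_iff.2 ⟨hxI, hxI'⟩
  obtain ⟨C, hCsub, hC⟩ := dep_exists_circuit hdep ((hfin.subset hI.subset).insert x)
  refine ⟨C, hC, ?_, hCsub.trans (insert_subset_insert hI.subset)⟩
  by_contra hxC
  have : C ⊆ I := fun y hy => ((hCsub hy).resolve_left (fun h => hxC (h ▸ hy)))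
  exact (hI.indep.subset this).not_dep hC.1

lemma rk_eq_ncard_basis (hI : M.IsBasis I X) (hfin : X.Finite) : rk M X = I.ncard := by
  have hub : ∀ b ∈ Set.ncard '' {J | M.Indep J ∧ J ⊆ X}, b ≤ I.ncard := by
    rintro b ⟨J, ⟨hJ, hJX⟩, rfl⟩
    obtain ⟨J', hJ', hJJ'⟩ := hJ.subset_isBasis_of_subset hJX hI.subset_ground
    have h1 : J'.ncard = I.ncard :=
      (hJ'.isBase_restrict).ncard_eq_ncard_of_isBase (hI.isBase_restrict)
    exact h1 ▸ Set.ncard_le_ncard hJJ' (hfin.subset hJ'.subset)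
  have hmem : I.ncard ∈ Set.ncard '' {J | M.Indep J ∧ J ⊆ X} :=
    ⟨I, ⟨hI.indep, hI.subset⟩, rfl⟩
  exact le_antisymm (csSup_le ⟨_, hmem⟩ hub) (le_csSup ⟨I.ncard, hub⟩ hmem)

lemma rk_restrict (hSR : S ⊆ R) : rk (M ↾ R) S = rk M S := by
  have hset : {I | (M ↾ R).Indep I ∧ I ⊆ S} = {I | M.Indep I ∧ I ⊆ S} := by
    ext J
    simp only [mem_setOf_eq, restrict_indep_iff]
    exact ⟨fun h => ⟨h.1.1, h.2⟩, fun h => ⟨⟨h.1, h.2.trans hSR⟩, h.2⟩⟩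
  unfold rk
  rw [hset]

lemma rk_diff_of_mem_closure (hX : X ⊆ M.E) (hfin : X.Finite)
    (h : x ∈ M.closure (X \ {x})) : rk M X = rk M (X \ {x}) := by
  obtain ⟨I, hI⟩ := M.exists_isBasis (X \ {x}) ((diff_subset).trans hX)
  have hIX : M.IsBasis I X := by
    refine hI.indep.isBasis_of_subset_of_subset_closure (hI.subset.trans diff_subset) ?_
    intro y hy
    rw [hI.closure_eq_closure]
    rcases eq_or_ne y x with rfl | hne
    · exact h
    · exact M.subset_closure _ (diff_subset.trans hX) ⟨hy, hne⟩
  rw [rk_eq_ncard_basis hIX hfin, rk_eq_ncard_basis hI hfin.diff]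

lemma rk_diff_of_not_mem_closure (hX : X ⊆ M.E) (hfin : X.Finite) (hxX : x ∈ X)
    (h : x ∉ M.closure (X \ {x})) : rk M X = rk M (X \ {x}) + 1 := by
  obtain ⟨I, hI⟩ := M.exists_isBasis (X \ {x}) ((diff_subset).trans hX)
  have hxI : x ∉ I := fun hx => (hI.subset hx).2 rfl
  have hxcl : x ∉ M.closure I := by rwa [hI.closure_eq_closure]
  have hins : M.Indep (insert x I) := by
    rw [hI.indep.insert_indep_iff_of_notMem hxI]
    exact ⟨hX hxX, hxcl⟩
  have hIX : M.IsBasis (insert x I) X := by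
    refine hins.isBasis_of_subset_of_subset_closure
      (insert_subset hxX (hI.subset.trans diff_subset)) ?_
    intro y hy
    rcases eq_or_ne y x with rfl | hne
    · exact M.subset_closure _ (hins.subset_ground) (mem_insert _ _)
    · have : y ∈ M.closure I := by
        rw [hI.closure_eq_closure]
        exact M.subset_closure _ (diff_subset.trans hX) ⟨hy, hne⟩
      exact M.closure_subset_closure (subset_insert _ _) this
  rw [rk_eq_ncard_basis hIX hfin, rk_eq_ncard_basis hI hfin.diff,
    Set.ncard_insert_of_notMem hxI (hfin.subset (hI.subset.trans diff_subset))]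

lemma nullity_restrict' (hSR : S ⊆ R) : nullity (M ↾ R) S = nullity M S := by
  unfold nullity; rw [rk_restrict hSR]

lemma ncard_diff_singleton_int (hxX : x ∈ X) (hfin : X.Finite) :
    (X.ncard : ℤ) = ((X \ {x}).ncard : ℤ) + 1 := by
  rw [← Set.ncard_diff_singleton_add_one hxX hfin]; push_cast; ring

lemma nullity_diff_of_mem_closure (hX : X ⊆ M.E) (hfin : X.Finite) (hxX : x ∈ X)
    (h : x ∈ M.closure (X \ {x})) : nullity M X = nullity M (X \ {x}) + 1 := by
  unfold nullity
  rw [rk_diff_of_mem_closure hX hfin h, ncard_diff_singleton_int hxX hfin]; ring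

lemma nullity_diff_of_not_mem_closure (hX : X ⊆ M.E) (hfin : X.Finite) (hxX : x ∈ X)
    (h : x ∉ M.closure (X \ {x})) : nullity M X = nullity M (X \ {x}) := by
  unfold nullity
  rw [rk_diff_of_not_mem_closure hX hfin hxX h, ncard_diff_singleton_int hxX hfin]
  push_cast; ring

lemma restrict_closure_eq' (hR : R ⊆ M.E) (hSR : S ⊆ R) :
    (M ↾ R).closure S = M.closure S ∩ R := by
  obtain ⟨I, hI⟩ := M.exists_isBasis S (hSR.trans hR)
  have hIR : (M ↾ R).IsBasis I S := (isBasis_restrict_iff hR).2 ⟨hI, hSR⟩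
  rw [← hIR.closure_eq_closure, ← hI.closure_eq_closure,
    hIR.indep.closure_eq_setOf_isBasis_insert, hI.indep.closure_eq_setOf_isBasis_insert]
  ext y
  simp only [mem_setOf_eq, mem_inter_iff]
  constructor
  · intro h
    have h2 := (isBasis_restrict_iff hR).1 h
    exact ⟨h2.1, h2.2 (mem_insert _ _)⟩
  · rintro ⟨h1, h2⟩
    exact (isBasis_restrict_iff hR).2 ⟨h1, insert_subset h2 (hI.subset.trans hSR)⟩

lemma flat_restrict_inter (hF : M.IsFlat F) (hR : R ⊆ M.E) : (M ↾ R).IsFlat (F ∩ R) := by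
  apply flat_of_closure_subset'
  · rw [restrict_ground_eq]; exact inter_subset_right
  · rw [restrict_closure_eq' hR inter_subset_right]
    rintro y ⟨hy1, hy2⟩
    refine ⟨?_, hy2⟩
    have h := M.closure_subset_closure (inter_subset_left (s := F) (t := R)) hy1
    rwa [hF.closure] at h

lemma circuit_restrict_iff (hR : R ⊆ M.E) :
    Circuit (M ↾ R) C ↔ Circuit M C ∧ C ⊆ R := by
  constructor
  · rintro ⟨hdep, hmin⟩
    have hd := (restrict_dep_iff).1 hdep
    exact ⟨⟨⟨hd.1, hd.2.trans hR⟩, fun D hD => (hmin D hD).of_restrict⟩, hd.2⟩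
  · rintro ⟨⟨hdep, hmin⟩, hCR⟩
    exact ⟨restrict_dep_iff.2 ⟨hdep.1, hCR⟩,
      fun D hD => (hmin D hD).indep_restrict_of_subset (hD.subset.trans hCR)⟩

lemma cyclic_restrict_iff (hR : R ⊆ M.E) (hSR : S ⊆ R) :
    Cyclic (M ↾ R) S ↔ Cyclic M S := by
  unfold Cyclic
  rw [restrict_ground_eq]
  constructor
  · rintro ⟨-, h⟩
    refine ⟨hSR.trans hR, fun x hx => ?_⟩
    obtain ⟨C, hC, hCS, hxC⟩ := h x hx
    exact ⟨C, ((circuit_restrict_iff hR).1 hC).1, hCS, hxC⟩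
  · rintro ⟨-, h⟩
    refine ⟨hSR, fun x hx => ?_⟩
    obtain ⟨C, hC, hCS, hxC⟩ := h x hx
    exact ⟨C, (circuit_restrict_iff hR).2 ⟨hC, hCS.trans hSR⟩, hCS, hxC⟩

end BasicLemmas

/-! ### The cyclic core -/

section Cyc
variable {M N : Matroid α} {F Z : Finset α} {C : Set α} {x : α}

/-- The cyclic core of a finite set: the union of the circuits contained in it. -/
noncomputable def cyc (N : Matroid α) (F : Finset α) : Finset α :=
  F.filter (fun x => ∃ C, Circuit N C ∧ C ⊆ ↑F ∧ x ∈ C)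

lemma cyc_subset (N : Matroid α) (F : Finset α) : cyc N F ⊆ F := Finset.filter_subset _ _

lemma mem_cyc {x : α} : x ∈ cyc N F ↔ x ∈ F ∧ ∃ C, Circuit N C ∧ C ⊆ ↑F ∧ x ∈ C :=
  Finset.mem_filter

lemma circuit_subset_cyc (hC : Circuit N C) (hCF : C ⊆ ↑F) : C ⊆ ↑(cyc N F) := by
  intro x hx
  simp only [Finset.mem_coe, mem_cyc]
  exact ⟨hCF hx, C, hC, hCF, hx⟩

lemma cyclic_cyc (N : Matroid α) (F : Finset α) : Cyclic N ↑(cyc N F) := by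
  constructor
  · intro x hx
    simp only [Finset.mem_coe, mem_cyc] at hx
    obtain ⟨-, C, hC, -, hxC⟩ := hx
    exact hC.subset_ground hxC
  · intro x hx
    simp only [Finset.mem_coe, mem_cyc] at hx
    obtain ⟨-, C, hC, hCF, hxC⟩ := hx
    exact ⟨C, hC, circuit_subset_cyc hC hCF, hxC⟩

lemma subset_cyc_of_cyclic (hZ : Cyclic N ↑Z) (hZF : Z ⊆ F) : Z ⊆ cyc N F := by
  intro x hx
  obtain ⟨C, hC, hCZ, hxC⟩ := hZ.2 x (Finset.mem_coe.2 hx)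
  exact mem_cyc.2 ⟨hZF hx, C, hC, hCZ.trans (Finset.coe_subset.2 hZF), hxC⟩

lemma flat_cyc (hF : N.IsFlat ↑F) : N.IsFlat ↑(cyc N F) := by
  apply flat_of_closure_subset' (cyclic_cyc N F).1
  intro y hy
  have hyF : y ∈ (↑F : Set α) := by
    have h := N.closure_subset_closure (Finset.coe_subset.2 (cyc_subset N F)) hy
    rwa [hF.closure] at h
  by_cases hyc : y ∈ (↑(cyc N F) : Set α)
  · exact hyc
  · obtain ⟨C, hC, hyC, hCsub⟩ :=
      exists_circuit_of_mem_closure (cyclic_cyc N F).1 (Set.toFinite _) hy hyc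
    have hCF : C ⊆ ↑F :=
      hCsub.trans (insert_subset hyF (Finset.coe_subset.2 (cyc_subset N F)))
    exact absurd (Finset.mem_coe.2 (mem_cyc.2 ⟨hyF, C, hC, hCF, hyC⟩)) hyc

lemma nullity_cyc (hFE : (↑F : Set α) ⊆ N.E) :
    nullity N ↑F = nullity N ↑(cyc N F) := by
  suffices h : ∀ n (G : Finset α), G.card ≤ n → cyc N F ⊆ G → G ⊆ F →
      nullity N ↑G = nullity N ↑(cyc N F) by
    exact h F.card F le_rfl (cyc_subset N F) Finset.Subset.rfl
  intro n
  induction n with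
  | zero =>
    intro G hcard hsub1 _
    have : G = ∅ := Finset.card_eq_zero.1 (Nat.le_zero.1 hcard)
    subst this
    rw [Finset.subset_empty.1 hsub1]
  | succ n ih =>
    intro G hcard hsub1 hsub2
    by_cases hGc : G ⊆ cyc N F
    · rw [Finset.Subset.antisymm hGc hsub1]
    · obtain ⟨x, hxG, hxc⟩ := Finset.not_subset.1 hGc
      have hxF : x ∈ F := hsub2 hxG
      have hGE : (↑G : Set α) ⊆ N.E := (Finset.coe_subset.2 hsub2).trans hFE
      have hxcl : x ∉ N.closure ((↑G : Set α) \ {x}) := by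
        intro hx
        have hsubE : ((↑G : Set α) \ {x}) ⊆ N.E := diff_subset.trans hGE
        obtain ⟨C, hC, hxC, hCsub⟩ :=
          exists_circuit_of_mem_closure hsubE (Set.toFinite _) hx (by simp)
        have hCF : C ⊆ ↑F := hCsub.trans
          (insert_subset (Finset.mem_coe.2 hxF)
            (diff_subset.trans (Finset.coe_subset.2 hsub2)))
        exact hxc (mem_cyc.2 ⟨hxF, C, hC, hCF, hxC⟩)
      have hnull : nullity N ↑G = nullity N ((↑G : Set α) \ {x}) :=
        nullity_diff_of_not_mem_closure hGE (Set.toFinite _) (Finset.mem_coe.2 hxG) hxcl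
      rw [hnull, ← Finset.coe_erase]
      refine ih (G.erase x) ?_ (Finset.subset_erase.2 ⟨hsub1, hxc⟩)
        ((Finset.erase_subset _ _).trans hsub2)
      have h1 : 1 ≤ G.card := Finset.card_pos.2 ⟨x, hxG⟩
      rw [Finset.card_erase_of_mem hxG]
      omega

end Cyc

/-! ### Unfolding `gamma` -/

lemma gamma_def (M : Matroid α) (X : Finset α) :
    gamma M X = nullity M ↑X -
      ∑ Z ∈ Finset.univ.filter (fun Z : Finset α => CyclicFlat M ↑Z ∧ Z ⊂ X),
        gamma M Z := by
  rw [gamma, Finset.sum_attach]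


/-! ### Vanishing of `gamma` on non-cyclic flats -/

lemma gamma_eq_zero_of_flat_not_cyclic {N : Matroid α} {F : Finset α}
    (hflat : N.IsFlat ↑F) (hnc : ¬ Cyclic N ↑F) : gamma N F = 0 := by
  have hFE : (↑F : Set α) ⊆ N.E := hflat.subset_ground
  have hcf : CyclicFlat N ↑(cyc N F) := ⟨cyclic_cyc N F, flat_cyc hflat⟩
  have hne : cyc N F ≠ F := fun h => hnc (h ▸ cyclic_cyc N F)
  have hssub : cyc N F ⊂ F := (Finset.ssubset_iff_subset_ne).2 ⟨cyc_subset N F, hne⟩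
  have hfilter : Finset.univ.filter (fun Z : Finset α => CyclicFlat N ↑Z ∧ Z ⊂ F)
      = Finset.univ.filter (fun Z : Finset α => CyclicFlat N ↑Z ∧ Z ⊆ cyc N F) := by
    ext Z
    simp only [Finset.mem_filter, Finset.mem_univ, true_and]
    constructor
    · rintro ⟨hZ, hZF⟩
      exact ⟨hZ, subset_cyc_of_cyclic hZ.1 hZF.subset⟩
    · rintro ⟨hZ, hZc⟩
      exact ⟨hZ, ssubset_of_subset_of_ssubset hZc hssub⟩
  have hsplit : Finset.univ.filter (fun Z : Finset α => CyclicFlat N ↑Z ∧ Z ⊆ cyc N F)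
      = insert (cyc N F)
          (Finset.univ.filter (fun Z : Finset α => CyclicFlat N ↑Z ∧ Z ⊂ cyc N F)) := by
    ext Z
    simp only [Finset.mem_insert, Finset.mem_filter, Finset.mem_univ, true_and]
    constructor
    · rintro ⟨hZ, hZc⟩
      rcases eq_or_ne Z (cyc N F) with h | h
      · exact Or.inl h
      · exact Or.inr ⟨hZ, (Finset.ssubset_iff_subset_ne).2 ⟨hZc, h⟩⟩
    · rintro (rfl | ⟨hZ, hZc⟩)
      · exact ⟨hcf, Finset.Subset.rfl⟩
      · exact ⟨hZ, hZc.subset⟩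
  have hnotmem : cyc N F ∉
      Finset.univ.filter (fun Z : Finset α => CyclicFlat N ↑Z ∧ Z ⊂ cyc N F) := by
    simp only [Finset.mem_filter, Finset.mem_univ, true_and]
    rintro ⟨-, h⟩
    exact (lt_irrefl _) h
  have hγ := gamma_def N (cyc N F)
  have hnull := nullity_cyc (N := N) (F := F) hFE
  rw [gamma_def, hfilter, hsplit, Finset.sum_insert hnotmem]
  linarith

/-! ### The correspondence between cyclic flats of `M` and of `M \ e` -/

section Corr
variable {M : Matroid α} {e : α}

lemma cf_mem_closure_diff {Z : Finset α} (hcf : CyclicFlat M ↑Z) (heZ : e ∈ Z) :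
    e ∈ M.closure ((↑Z : Set α) \ {e}) := by
  obtain ⟨C, hC, hCZ, heC⟩ := hcf.1.2 e (Finset.mem_coe.2 heZ)
  exact M.closure_subset_closure (diff_subset_diff_left hCZ) (hC.mem_closure_diff heC)

lemma coe_erase_eq_inter {Z : Finset α} (hZE : (↑Z : Set α) ⊆ M.E) :
    (↑(Z.erase e) : Set α) = ↑Z ∩ (M.E \ {e}) := by
  rw [Finset.coe_erase]
  ext y
  simp only [mem_diff, mem_singleton_iff, mem_inter_iff, Finset.mem_coe]
  exact ⟨fun ⟨h1, h2⟩ => ⟨h1, hZE h1, h2⟩, fun ⟨h1, _, h3⟩ => ⟨h1, h3⟩⟩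

lemma flat_erase_of_flat {Z : Finset α} (hflat : M.IsFlat ↑Z) : (deleteElem M e).IsFlat ↑(Z.erase e) := by
  rw [deleteElem, coe_erase_eq_inter (M := M) hflat.subset_ground]
  exact flat_restrict_inter hflat diff_subset

/-- Injectivity of `Z ↦ Z \ e` on cyclic flats of `M`. -/
lemma cf_erase_injective {Z₁ Z₂ : Finset α} (h₁ : CyclicFlat M ↑Z₁) (h₂ : CyclicFlat M ↑Z₂)
    (h : Z₁.erase e = Z₂.erase e) : Z₁ = Z₂ := by
  have key : ∀ Z W : Finset α, CyclicFlat M ↑Z → CyclicFlat M ↑W → e ∈ Z → e ∉ W →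
      Z.erase e = W.erase e → False := by
    intro Z W hZ hW heZ heW hZW
    have h1 : e ∈ M.closure ((↑Z : Set α) \ {e}) := cf_mem_closure_diff hZ heZ
    have h2 : ((↑Z : Set α) \ {e}) = ↑W := by
      rw [← Finset.coe_erase, hZW, Finset.erase_eq_of_notMem heW]
    rw [h2, hW.2.closure] at h1
    exact heW (Finset.mem_coe.1 h1)
  by_cases he₁ : e ∈ Z₁ <;> by_cases he₂ : e ∈ Z₂
  · rw [← Finset.insert_erase he₁, ← Finset.insert_erase he₂, h]
  · exact absurd (key Z₁ Z₂ h₁ h₂ he₁ he₂ h) not_false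
  · exact absurd (key Z₂ Z₁ h₂ h₁ he₂ he₁ h.symm) not_false
  · rw [← Finset.erase_eq_of_notMem he₁, ← Finset.erase_eq_of_notMem he₂, h]

lemma corr_sum (M : Matroid α) (e : α) (he : e ∈ M.E) (X : Finset α)
    (hXE : (↑X : Set α) ⊆ M.E) (heX : e ∈ X)
    (hcl : e ∈ M.closure ((↑X : Set α) \ {e})) :
    ∑ Z ∈ Finset.univ.filter (fun Z : Finset α => CyclicFlat M ↑Z ∧ Z ⊂ X),
      gamma (deleteElem M e) (Z.erase e)
    = ∑ Z ∈ Finset.univ.filter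
        (fun Z : Finset α => CyclicFlat (deleteElem M e) ↑Z ∧ Z ⊂ X.erase e),
      gamma (deleteElem M e) Z := by
  classical
  set M' := deleteElem M e with hM'def
  have hR : M.E \ {e} ⊆ M.E := diff_subset
  set P := Finset.univ.filter (fun Z : Finset α => CyclicFlat M ↑Z ∧ Z ⊂ X) with hP
  set Q := Finset.univ.filter
      (fun Z : Finset α => CyclicFlat M' ↑Z ∧ Z ⊂ X.erase e) with hQ
  -- split off the terms with non-cyclic image; they vanish
  have hsplit := Finset.sum_filter_add_sum_filter_not P
    (fun Z => Cyclic M' ↑(Z.erase e)) (fun Z => gamma M' (Z.erase e))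
  have hzero : ∑ Z ∈ P.filter (fun Z => ¬ Cyclic M' ↑(Z.erase e)),
      gamma M' (Z.erase e) = 0 := by
    apply Finset.sum_eq_zero
    intro Z hZ
    simp only [Finset.mem_filter, hP, Finset.mem_univ, true_and] at hZ
    obtain ⟨⟨hZcf, -⟩, hZnc⟩ := hZ
    exact gamma_eq_zero_of_flat_not_cyclic (flat_erase_of_flat hZcf.2) hZnc
  rw [← hsplit, hzero, add_zero]
  -- now a bijection between the remaining terms and `Q`
  apply Finset.sum_bij (fun Z _ => Z.erase e)
  · -- maps into Q
    intro Z hZ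
    rw [Finset.mem_filter, hP, Finset.mem_filter] at hZ
    obtain ⟨⟨-, hZcf, hZX⟩, hZc⟩ := hZ
    rw [hQ, Finset.mem_filter]
    refine ⟨Finset.mem_univ _, ?_, ?_⟩
    · exact ⟨hZc, flat_erase_of_flat hZcf.2⟩
    · refine (Finset.ssubset_iff_subset_ne).2 ⟨Finset.erase_subset_erase e hZX.subset, ?_⟩
      intro hEq
      by_cases heZ : e ∈ Z
      · apply hZX.ne
        rw [← Finset.insert_erase heZ, hEq, Finset.insert_erase heX]
      · rw [Finset.erase_eq_of_notMem heZ] at hEq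
        subst hEq
        rw [← Finset.coe_erase, hZcf.2.closure] at hcl
        exact heZ (Finset.mem_coe.1 hcl)
  · -- injectivity
    intro Z₁ h₁ Z₂ h₂ h
    rw [Finset.mem_filter, hP, Finset.mem_filter] at h₁ h₂
    exact cf_erase_injective h₁.1.2.1 h₂.1.2.1 h
  · -- surjectivity
    intro Z' hZ'
    rw [hQ, Finset.mem_filter] at hZ'
    obtain ⟨-, hZ'cf, hZ'sub⟩ := hZ'
    have hZ'R : (↑Z' : Set α) ⊆ M.E \ {e} := by
      have := hZ'cf.1.1
      rwa [hM'def, deleteElem, restrict_ground_eq] at this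
    have heZ' : e ∉ Z' := fun h => (hZ'R (Finset.mem_coe.2 h)).2 rfl
    have hZ'E : (↑Z' : Set α) ⊆ M.E := hZ'R.trans hR
    have hclM : M.closure ↑Z' ∩ (M.E \ {e}) = ↑Z' := by
      rw [← restrict_closure_eq' hR hZ'R, ← deleteElem, ← hM'def, hZ'cf.2.closure]
    have hsub_cl : M.closure ↑Z' ⊆ insert e (↑Z' : Set α) := by
      intro y hy
      rcases eq_or_ne y e with rfl | hne
      · exact mem_insert _ _
      · exact Or.inr (hclM ▸ ⟨hy, M.closure_subset_ground _ hy, hne⟩)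
    by_cases hecl : e ∈ M.closure (↑Z' : Set α)
    · -- the preimage is `insert e Z'`
      refine ⟨insert e Z', ?_, Finset.erase_insert heZ'⟩
      have hcleq : M.closure (↑Z' : Set α) = insert e ↑Z' :=
        hsub_cl.antisymm (insert_subset hecl (M.subset_closure _ hZ'E))
      have hflatZ : M.IsFlat ↑(insert e Z') := by
        rw [Finset.coe_insert, ← hcleq]
        exact flat_closure' M _
      have hcycZ : Cyclic M ↑(insert e Z') := by
        refine ⟨?_, ?_⟩
        · rw [Finset.coe_insert]
          exact insert_subset he hZ'E
        · intro x hx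
          rw [Finset.coe_insert] at hx
          rcases hx with rfl | hx
          · obtain ⟨C, hC, hxC, hCsub⟩ :=
              exists_circuit_of_mem_closure hZ'E (Set.toFinite _) hecl
                (fun h => heZ' (Finset.mem_coe.1 h))
            refine ⟨C, hC, ?_, hxC⟩
            rw [Finset.coe_insert]
            exact hCsub
          · obtain ⟨C, hC, hCsub, hxC⟩ := hZ'cf.1.2 x hx
            have hCM : Circuit M C := by
              have := hC
              rw [hM'def, deleteElem, circuit_restrict_iff hR] at this
              exact this.1
            refine ⟨C, hCM, ?_, hxC⟩
            rw [Finset.coe_insert]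
            exact hCsub.trans (subset_insert _ _)
      rw [Finset.mem_filter, hP, Finset.mem_filter]
      refine ⟨⟨Finset.mem_univ _, ⟨hcycZ, hflatZ⟩, ?_⟩, ?_⟩
      · refine (Finset.ssubset_iff_subset_ne).2 ⟨?_, ?_⟩
        · exact Finset.insert_subset heX
            (hZ'sub.subset.trans (Finset.erase_subset _ _))
        · intro hEq
          apply hZ'sub.ne
          rw [← hEq, Finset.erase_insert heZ']
      · rw [Finset.erase_insert heZ']
        exact hZ'cf.1
    · -- the preimage is `Z'` itself
      refine ⟨Z', ?_, Finset.erase_eq_of_notMem heZ'⟩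
      have hflatZ : M.IsFlat ↑Z' := by
        apply flat_of_closure_subset' hZ'E
        intro y hy
        rcases hsub_cl hy with rfl | h
        · exact absurd hy hecl
        · exact h
      have hcycZ : Cyclic M ↑Z' := by
        have := hZ'cf.1
        rwa [hM'def, deleteElem, cyclic_restrict_iff hR hZ'R] at this
      rw [Finset.mem_filter, hP, Finset.mem_filter]
      refine ⟨⟨Finset.mem_univ _, ⟨hcycZ, hflatZ⟩, ?_⟩, ?_⟩
      · exact ssubset_of_ssubset_of_subset hZ'sub (Finset.erase_subset _ _)
      · rw [Finset.erase_eq_of_notMem heZ']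
        exact hZ'cf.1
  · -- values agree
    intro Z hZ
    rfl

/-- The key computation: `Δγ(X) + Σ_{Z ∈ Z(M), Z ⊊ X} Δγ(Z) = -1`. -/
lemma key_lemma (M : Matroid α) (e : α) (he : e ∈ M.E) (X : Finset α)
    (hXE : (↑X : Set α) ⊆ M.E) (heX : e ∈ X)
    (hcl : e ∈ M.closure ((↑X : Set α) \ {e})) :
    dgamma M e X +
      ∑ Z ∈ Finset.univ.filter (fun Z : Finset α => CyclicFlat M ↑Z ∧ Z ⊂ X),
        dgamma M e Z = -1 := by
  have hR : M.E \ {e} ⊆ M.E := diff_subset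
  have h1 := gamma_def M X
  have h2 := gamma_def (deleteElem M e) (X.erase e)
  have h3 := corr_sum M e he X hXE heX hcl
  have hnull : nullity (deleteElem M e) ↑(X.erase e) = nullity M ↑X - 1 := by
    have hsub : ((↑X : Set α) \ {e}) ⊆ M.E \ {e} := diff_subset_diff_left hXE
    have hn1 : nullity (deleteElem M e) ↑(X.erase e) = nullity M ((↑X : Set α) \ {e}) := by
      rw [Finset.coe_erase, deleteElem]
      exact nullity_restrict' hsub
    have hn2 : nullity M ↑X = nullity M ((↑X : Set α) \ {e}) + 1 :=
      nullity_diff_of_mem_closure hXE (Set.toFinite _) (Finset.mem_coe.2 heX) hcl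
    rw [hn1]; linarith
  unfold dgamma
  rw [Finset.sum_sub_distrib, h3]
  linarith

end Corr


/-! ### Summation over all cyclic flats inside a cyclic flat -/

lemma sum_subsets_cyclicflat (M : Matroid α) (e : α) (he : e ∈ M.E) (V : Finset α)
    (hV : CyclicFlat M ↑V) (hC : ∃ C, Circuit M C ∧ C ⊆ (↑V : Set α) ∧ e ∈ C) :
    ∑ Z ∈ Finset.univ.filter (fun Z : Finset α => CyclicFlat M ↑Z ∧ Z ⊆ V),
      dgamma M e Z = -1 := by
  obtain ⟨C, hCc, hCV, heC⟩ := hC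
  have heV : e ∈ V := Finset.mem_coe.1 (hCV heC)
  have hcl : e ∈ M.closure ((↑V : Set α) \ {e}) :=
    M.closure_subset_closure (diff_subset_diff_left hCV) (hCc.mem_closure_diff heC)
  have hsplit : Finset.univ.filter (fun Z : Finset α => CyclicFlat M ↑Z ∧ Z ⊆ V)
      = insert V (Finset.univ.filter (fun Z : Finset α => CyclicFlat M ↑Z ∧ Z ⊂ V)) := by
    ext Z
    simp only [Finset.mem_insert, Finset.mem_filter, Finset.mem_univ, true_and]
    constructor
    · rintro ⟨hZ, hZc⟩
      rcases eq_or_ne Z V with h | h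
      · exact Or.inl h
      · exact Or.inr ⟨hZ, (Finset.ssubset_iff_subset_ne).2 ⟨hZc, h⟩⟩
    · rintro (rfl | ⟨hZ, hZc⟩)
      · exact ⟨hV, Finset.Subset.rfl⟩
      · exact ⟨hZ, hZc.subset⟩
  have hnotmem : V ∉ Finset.univ.filter (fun Z : Finset α => CyclicFlat M ↑Z ∧ Z ⊂ V) := by
    simp only [Finset.mem_filter, Finset.mem_univ, true_and]
    rintro ⟨-, h⟩
    exact (lt_irrefl _) h
  rw [hsplit, Finset.sum_insert hnotmem]
  exact key_lemma M e he V hV.1.1 heV hcl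

/-! ### Meets of families of flats -/

/-- The intersection of a finite family of finsets. -/
noncomputable def meetF (S : Finset (Finset α)) : Finset α :=
  Finset.univ.filter (fun x => ∀ W ∈ S, x ∈ W)

lemma mem_meetF {S : Finset (Finset α)} {x : α} : x ∈ meetF S ↔ ∀ W ∈ S, x ∈ W := by
  simp [meetF]

lemma flat_meetF {M : Matroid α} {S : Finset (Finset α)} (hS : S.Nonempty)
    (h : ∀ W ∈ S, M.IsFlat ↑W) : M.IsFlat ↑(meetF S) := by
  have hne : Nonempty {W // W ∈ S} := ⟨⟨hS.choose, hS.choose_spec⟩⟩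
  have hco : (↑(meetF S) : Set α) = ⋂ (W : {W // W ∈ S}), (↑W.1 : Set α) := by
    ext x
    simp only [Finset.mem_coe, mem_meetF, Set.mem_iInter, Subtype.forall]
  rw [hco]
  exact IsFlat.iInter (fun W => h W.1 W.2)

/-! ### An inclusion-exclusion identity -/

lemma ie_aux {β : Type*} [DecidableEq β] (Y T : Finset β) (hTY : T ⊆ Y) :
    ∑ S ∈ Y.powerset, (if S.Nonempty ∧ S ⊆ T then (-1 : ℤ) ^ (S.card + 1) else 0)
      = if T.Nonempty then 1 else 0 := by
  have h1 : ∑ S ∈ Y.powerset, (if S.Nonempty ∧ S ⊆ T then (-1 : ℤ) ^ (S.card + 1) else 0)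
      = ∑ S ∈ T.powerset, (if S.Nonempty then (-1 : ℤ) ^ (S.card + 1) else 0) := by
    rw [← Finset.sum_subset (Finset.powerset_mono.2 hTY)]
    · apply Finset.sum_congr rfl
      intro S hS
      have hST : S ⊆ T := Finset.mem_powerset.1 hS
      by_cases hne : S.Nonempty
      · rw [if_pos ⟨hne, hST⟩, if_pos hne]
      · rw [if_neg (fun h => hne h.1), if_neg hne]
    · intro S _ hST
      have : ¬ S ⊆ T := fun h => hST (Finset.mem_powerset.2 h)
      rw [if_neg (fun hh => this hh.2)]
  rw [h1]
  have h2 : ∀ S ∈ T.powerset, (if S.Nonempty then (-1 : ℤ) ^ (S.card + 1) else 0)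
      = -((-1 : ℤ) ^ S.card) - (if S = ∅ then -((-1 : ℤ) ^ S.card) else 0) := by
    intro S _
    rcases eq_or_ne S ∅ with rfl | h
    · simp
    · rw [if_pos (Finset.nonempty_iff_ne_empty.2 h), if_neg h, pow_succ]
      ring
  rw [Finset.sum_congr rfl h2, Finset.sum_sub_distrib]
  have h3 : ∑ S ∈ T.powerset, -((-1 : ℤ) ^ S.card) = -(if T = ∅ then 1 else 0) := by
    rw [Finset.sum_neg_distrib, Finset.sum_powerset_neg_one_pow_card]
  have h4 : ∑ S ∈ T.powerset, (if S = ∅ then -((-1 : ℤ) ^ S.card) else 0) = -1 := by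
    rw [Finset.sum_ite_eq' T.powerset (∅ : Finset β) (fun S => -((-1 : ℤ) ^ S.card))]
    simp
  rw [h3, h4]
  rcases eq_or_ne T ∅ with rfl | h
  · simp
  · rw [if_neg h, if_pos (Finset.nonempty_iff_ne_empty.2 h)]
    ring

theorem statement_13 (M : Matroid α) (e : α) (he : e ∈ M.E)
    (X : Finset α) (hcyc : Cyclic M ↑X) (heX : e ∈ X)
    (Y : Finset (Finset α)) (hYne : Y.Nonempty)
    (hY : ∀ Z ∈ Y, CyclicFlat M ↑Z ∧ Z ⊂ X)
    (hmeet : ∃ C : Set α, Circuit M C ∧ (∀ Z ∈ Y, C ⊆ ↑Z) ∧ e ∈ C) :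
    -dgamma M e X =
      ∑ Z ∈ Finset.univ.filter
          (fun Z : Finset α => CyclicFlat M ↑Z ∧ Z ⊂ X ∧ ∀ W ∈ Y, ¬ Z ⊆ W),
        dgamma M e Z := by
  classical
  obtain ⟨C, hCc, hCY, heC⟩ := hmeet
  obtain ⟨W₀, hW₀⟩ := id hYne
  have hXE : (↑X : Set α) ⊆ M.E := hcyc.1
  have hCX : C ⊆ (↑X : Set α) :=
    (hCY W₀ hW₀).trans (Finset.coe_subset.2 (hY W₀ hW₀).2.subset)
  have hcl : e ∈ M.closure ((↑X : Set α) \ {e}) :=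
    M.closure_subset_closure (diff_subset_diff_left hCX) (hCc.mem_closure_diff heC)
  have hkey := key_lemma M e he X hXE heX hcl
  set P := Finset.univ.filter (fun Z : Finset α => CyclicFlat M ↑Z ∧ Z ⊂ X) with hP
  set A := Finset.univ.filter
      (fun Z : Finset α => CyclicFlat M ↑Z ∧ Z ⊂ X ∧ ∀ W ∈ Y, ¬ Z ⊆ W) with hA
  set B := Finset.univ.filter
      (fun Z : Finset α => CyclicFlat M ↑Z ∧ ∃ W ∈ Y, Z ⊆ W) with hB
  have hPB : P.filter (fun Z => ∃ W ∈ Y, Z ⊆ W) = B := by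
    rw [hP, hB, Finset.filter_filter]
    ext Z
    simp only [Finset.mem_filter, Finset.mem_univ, true_and]
    constructor
    · rintro ⟨⟨hcf, _⟩, hex⟩
      exact ⟨hcf, hex⟩
    · rintro ⟨hcf, W, hWY, hZW⟩
      exact ⟨⟨hcf, ssubset_of_subset_of_ssubset hZW ((hY W hWY).2)⟩, W, hWY, hZW⟩
  have hPA : P.filter (fun Z => ¬ ∃ W ∈ Y, Z ⊆ W) = A := by
    rw [hP, hA, Finset.filter_filter]
    ext Z
    simp only [Finset.mem_filter, Finset.mem_univ, true_and, not_exists]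
    constructor
    · rintro ⟨⟨hcf, hZX⟩, hall⟩
      exact ⟨hcf, hZX, fun W hW hZW => hall W ⟨hW, hZW⟩⟩
    · rintro ⟨hcf, hZX, hall⟩
      exact ⟨⟨hcf, hZX⟩, fun W hc => hall W hc.1 hc.2⟩
  have hPsplit : ∑ Z ∈ P, dgamma M e Z
      = ∑ Z ∈ B, dgamma M e Z + ∑ Z ∈ A, dgamma M e Z := by
    rw [← hPB, ← hPA]
    exact (Finset.sum_filter_add_sum_filter_not P _ _).symm
  have hBval : ∑ Z ∈ B, dgamma M e Z = -1 := by
    have hBeq : B = (Finset.univ.filter (fun Z : Finset α => CyclicFlat M ↑Z)).filter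
        (fun Z => ∃ W ∈ Y, Z ⊆ W) := by
      rw [hB, Finset.filter_filter]
    rw [hBeq, Finset.sum_filter]
    have hpt : ∀ Z ∈ Finset.univ.filter (fun Z : Finset α => CyclicFlat M ↑Z),
        (if ∃ W ∈ Y, Z ⊆ W then dgamma M e Z else 0)
          = ∑ S ∈ Y.powerset,
              (if S.Nonempty ∧ ∀ W ∈ S, Z ⊆ W then
                (-1 : ℤ) ^ (S.card + 1) * dgamma M e Z else 0) := by
      intro Z _
      have hstep : ∀ S ∈ Y.powerset,
          (if S.Nonempty ∧ ∀ W ∈ S, Z ⊆ W then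
            (-1 : ℤ) ^ (S.card + 1) * dgamma M e Z else 0)
            = (if S.Nonempty ∧ S ⊆ Y.filter (fun W => Z ⊆ W) then
                (-1 : ℤ) ^ (S.card + 1) else 0) * dgamma M e Z := by
        intro S hS
        have hSY := Finset.mem_powerset.1 hS
        by_cases h : S.Nonempty ∧ ∀ W ∈ S, Z ⊆ W
        · rw [if_pos h, if_pos ⟨h.1, fun W hW => Finset.mem_filter.2 ⟨hSY hW, h.2 W hW⟩⟩]
        · rw [if_neg h, if_neg, zero_mul]
          rintro ⟨h1, h2⟩
          exact h ⟨h1, fun W hW => (Finset.mem_filter.1 (h2 hW)).2⟩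
      rw [Finset.sum_congr rfl hstep, ← Finset.sum_mul,
        ie_aux Y _ (Finset.filter_subset _ _)]
      by_cases h : ∃ W ∈ Y, Z ⊆ W
      · rw [if_pos h, if_pos (Finset.filter_nonempty_iff.2 h), one_mul]
      · rw [if_neg h, if_neg (fun hne => h (Finset.filter_nonempty_iff.1 hne)), zero_mul]
    rw [Finset.sum_congr rfl hpt, Finset.sum_comm]
    have hinner : ∀ S ∈ Y.powerset,
        (∑ Z ∈ Finset.univ.filter (fun Z : Finset α => CyclicFlat M ↑Z),
          if S.Nonempty ∧ ∀ W ∈ S, Z ⊆ W then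
            (-1 : ℤ) ^ (S.card + 1) * dgamma M e Z else 0)
          = if S.Nonempty then (-1 : ℤ) ^ (S.card + 1) * (-1) else 0 := by
      intro S hS
      have hSY := Finset.mem_powerset.1 hS
      by_cases hSne : S.Nonempty
      · simp only [hSne, true_and, if_true]
        rw [← Finset.sum_filter]
        have hVcf : CyclicFlat M ↑(cyc M (meetF S)) :=
          ⟨cyclic_cyc M (meetF S),
            flat_cyc (flat_meetF hSne (fun W hW => (hY W (hSY hW)).1.2))⟩
        have hfeq : (Finset.univ.filter (fun Z : Finset α => CyclicFlat M ↑Z)).filter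
            (fun Z => ∀ W ∈ S, Z ⊆ W)
            = Finset.univ.filter
                (fun Z : Finset α => CyclicFlat M ↑Z ∧ Z ⊆ cyc M (meetF S)) := by
          rw [Finset.filter_filter]
          ext Z
          simp only [Finset.mem_filter, Finset.mem_univ, true_and]
          constructor
          · rintro ⟨hZcf, hZW⟩
            refine ⟨hZcf, subset_cyc_of_cyclic hZcf.1 ?_⟩
            intro x hx
            exact mem_meetF.2 (fun W hW => hZW W hW hx)
          · rintro ⟨hZcf, hZc⟩
            refine ⟨hZcf, fun W hW x hx => ?_⟩
            exact mem_meetF.1 (cyc_subset _ _ (hZc hx)) W hW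
        have hCmeet : C ⊆ (↑(cyc M (meetF S)) : Set α) := by
          apply circuit_subset_cyc hCc
          intro x hx
          exact Finset.mem_coe.2
            (mem_meetF.2 (fun W hW => Finset.mem_coe.1 (hCY W (hSY hW) hx)))
        have hsum := sum_subsets_cyclicflat M e he (cyc M (meetF S)) hVcf
          ⟨C, hCc, hCmeet, heC⟩
        rw [← Finset.mul_sum, hfeq, hsum]
      · simp only [hSne, false_and, if_false, Finset.sum_const_zero]
    rw [Finset.sum_congr rfl hinner]
    have hfin : ∀ S ∈ Y.powerset,
        (if S.Nonempty then (-1 : ℤ) ^ (S.card + 1) * (-1) else 0)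
          = (-1 : ℤ) ^ S.card - (if S = ∅ then (-1 : ℤ) ^ S.card else 0) := by
      intro S _
      rcases eq_or_ne S ∅ with rfl | h
      · simp
      · rw [if_pos (Finset.nonempty_iff_ne_empty.2 h), if_neg h, pow_succ]
        ring
    rw [Finset.sum_congr rfl hfin, Finset.sum_sub_distrib,
      Finset.sum_powerset_neg_one_pow_card,
      Finset.sum_ite_eq' Y.powerset (∅ : Finset (Finset α))
        (fun S => (-1 : ℤ) ^ S.card)]
    rw [if_neg (Finset.nonempty_iff_ne_empty.1 hYne),
      if_pos (Finset.empty_mem_powerset Y)]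
    norm_num
  linarith [hkey, hPsplit, hBval]


end Paper
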